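/- arXiv:2504.14407 — 5 statements merged into one kernel-verified Lean document; each statement's English description precedes it below -/
import Mathlib

section
/- Let H be a real inner product space and let u, y ∈ H be nonzero vectors satisfying ⟨u, y⟩ ≥ δ‖u‖² + ε‖y‖² with δ, ε > 0 and 4δε ≤ 1. Define the complex number z = (‖y‖/‖u‖)·exp(i·arccos(⟨u,y⟩/(‖u‖‖y‖))). Then Re(z) ≥ δ, |z| ≤ 1/ε, and |arg z| ≤ arccos(2√(δε)). -/
open RealInnerProductSpace

theorem srg_point_in_truncated_disk_sector {H : Type*} [NormedAddCommGroup H]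
    [InnerProductSpace ℝ H] (u y : H) (hu : u ≠ 0) (hy : y ≠ 0)
    (δ ε : ℝ) (hδ : 0 < δ) (hε : 0 < ε) (hδε : 4 * δ * ε ≤ 1)
    (h : ⟪u, y⟫ ≥ δ * ‖u‖ ^ 2 + ε * ‖y‖ ^ 2)
    (z : ℂ)
    (hz : z = (‖y‖ / ‖u‖ : ℝ) *
      Complex.exp (Complex.I * (Real.arccos (⟪u, y⟫ / (‖u‖ * ‖y‖)) : ℝ))) :
    z.re ≥ δ ∧ ‖z‖ ≤ 1 / ε ∧
      |z.arg| ≤ Real.arccos (2 * Real.sqrt (δ * ε)) := by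
  set a := ‖u‖ with ha
  set b := ‖y‖ with hb
  have ha0 : 0 < a := norm_pos_iff.mpr hu
  have hb0 : 0 < b := norm_pos_iff.mpr hy
  set c := (⟪u, y⟫ : ℝ) with hc
  have hcab : c ≤ a * b := real_inner_le_norm u y
  have hc0 : 0 < c := lt_of_lt_of_le (by positivity) h
  set θ := Real.arccos (c / (a * b)) with hθ
  have hcos : Real.cos θ = c / (a * b) := by
    apply Real.cos_arccos
    · have : (0:ℝ) ≤ c / (a * b) := by positivity
      linarith
    · rw [div_le_one (by positivity)]; exact hcab
  have hzeq : z = Complex.ofReal (b / a) * (Complex.cos θ + Complex.sin θ * Complex.I) := by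
    rw [hz, mul_comm Complex.I, Complex.exp_mul_I]
  have hre : z.re = (b / a) * Real.cos θ := by
    rw [hzeq]; simp [Complex.cos_ofReal_re, Complex.sin_ofReal_re]
  have hre' : z.re = c / a ^ 2 := by
    rw [hre, hcos]; field_simp
  refine ⟨?_, ?_, ?_⟩
  · rw [hre']
    rw [ge_iff_le, le_div_iff₀ (by positivity)]
    nlinarith [sq_nonneg b, mul_pos hε (mul_pos hb0 hb0)]
  · have habs : ‖z‖ = b / a := by
      rw [hz]
      rw [norm_mul, Complex.norm_real, Real.norm_eq_abs, abs_of_pos (by positivity)]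
      rw [mul_comm Complex.I, Complex.norm_exp_ofReal_mul_I, mul_one]
    rw [habs]
    rw [div_le_div_iff₀ ha0 hε]
    -- b * ε ≤ a : from ε b² ≤ c ≤ a b
    have h1 : ε * b ^ 2 ≤ a * b := by nlinarith [mul_pos hδ (mul_pos ha0 ha0)]
    nlinarith
  · have hθ0 : 0 ≤ θ := Real.arccos_nonneg _
    have hθpi : θ ≤ Real.pi := Real.arccos_le_pi _
    have harg : z.arg = θ := by
      rw [hzeq, Complex.arg_real_mul _ (by positivity : (0:ℝ) < b/a)]
      exact Complex.arg_cos_add_sin_mul_I ⟨lt_of_lt_of_le (by linarith [Real.pi_pos]) hθ0, hθpi⟩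
    rw [harg, abs_of_nonneg hθ0, hθ, Real.arccos_eq_pi_div_two_sub_arcsin,
      Real.arccos_eq_pi_div_two_sub_arcsin]
    have hmono : Real.arcsin (2 * Real.sqrt (δ * ε)) ≤ Real.arcsin (c / (a * b)) := by
      apply Real.monotone_arcsin
      rw [le_div_iff₀ (by positivity)]
      have hs : Real.sqrt (δ * ε) * Real.sqrt (δ * ε) = δ * ε :=
        Real.mul_self_sqrt (by positivity)
      have hsδ : Real.sqrt δ * Real.sqrt δ = δ := Real.mul_self_sqrt hδ.le
      have hsε : Real.sqrt ε * Real.sqrt ε = ε := Real.mul_self_sqrt hε.le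
      have hsde : Real.sqrt (δ * ε) = Real.sqrt δ * Real.sqrt ε := Real.sqrt_mul hδ.le ε
      nlinarith [sq_nonneg (Real.sqrt δ * a - Real.sqrt ε * b),
        Real.sqrt_nonneg δ, Real.sqrt_nonneg ε]
    linarith
end

section
/- Let H be a real inner product space, and let d, u₁, u₂, y₂ ∈ H with u₁ = d + y₂, u₁ ≠ 0, u₂ ≠ 0, y₂ ≠ 0. If ⟨u₁, u₂⟩/(‖u₁‖·‖u₂‖) − ⟨y₂, u₂⟩/(‖y₂‖·‖u₂‖) ≥ ε̄ for some ε̄ > 0, then ‖u₁‖ ≤ (2/ε̄)·‖d‖. -/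
open RealInnerProductSpace

theorem small_phase_feedback_estimate {H : Type*} [NormedAddCommGroup H]
    [InnerProductSpace ℝ H] (d u₁ u₂ y₂ : H)
    (hfb : u₁ = d + y₂) (hu₁ : u₁ ≠ 0) (hu₂ : u₂ ≠ 0) (hy₂ : y₂ ≠ 0)
    (ε : ℝ) (hε : 0 < ε)
    (h : ⟪u₁, u₂⟫ / (‖u₁‖ * ‖u₂‖) - ⟪y₂, u₂⟫ / (‖y₂‖ * ‖u₂‖) ≥ ε) :
    ‖u₁‖ ≤ (2 / ε) * ‖d‖ := by
  have hu₁p : (0:ℝ) < ‖u₁‖ := norm_pos_iff.mpr hu₁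
  have hu₂p : (0:ℝ) < ‖u₂‖ := norm_pos_iff.mpr hu₂
  have hy₂p : (0:ℝ) < ‖y₂‖ := norm_pos_iff.mpr hy₂
  set c2 : ℝ := ⟪y₂, u₂⟫ / (‖y₂‖ * ‖u₂‖) with hc2
  have hc2abs : |c2| ≤ 1 := by
    rw [hc2, abs_div, abs_of_pos (mul_pos hy₂p hu₂p)]
    rw [div_le_one (mul_pos hy₂p hu₂p)]
    exact abs_real_inner_le_norm y₂ u₂
  have hd : d = u₁ - y₂ := by rw [hfb]; abel
  have hdin : ⟪d, u₂⟫ = ⟪u₁, u₂⟫ - ⟪y₂, u₂⟫ := by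
    rw [hd, inner_sub_left]
  have key : ε * ‖u₁‖ ≤ 2 * ‖d‖ := by
    have h1 : ε * ‖u₁‖ ≤ (⟪u₁, u₂⟫ / (‖u₁‖ * ‖u₂‖) - c2) * ‖u₁‖ := by
      apply mul_le_mul_of_nonneg_right h hu₁p.le
    have h2 : (⟪u₁, u₂⟫ / (‖u₁‖ * ‖u₂‖) - c2) * ‖u₁‖
        = ⟪d, u₂⟫ / ‖u₂‖ - c2 * (‖u₁‖ - ‖y₂‖) := by
      rw [hdin, hc2]
      field_simp
      ring
    have h3 : ⟪d, u₂⟫ / ‖u₂‖ ≤ ‖d‖ := by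
      rw [div_le_iff₀ hu₂p]
      exact real_inner_le_norm d u₂
    have h4 : -(c2 * (‖u₁‖ - ‖y₂‖)) ≤ ‖d‖ := by
      calc -(c2 * (‖u₁‖ - ‖y₂‖)) ≤ |c2 * (‖u₁‖ - ‖y₂‖)| := neg_le_abs _
        _ = |c2| * |‖u₁‖ - ‖y₂‖| := abs_mul _ _
        _ ≤ 1 * |‖u₁‖ - ‖y₂‖| := by
            apply mul_le_mul_of_nonneg_right hc2abs (abs_nonneg _)
        _ = |‖u₁‖ - ‖y₂‖| := one_mul _
        _ ≤ ‖u₁ - y₂‖ := abs_norm_sub_norm_le u₁ y₂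
        _ = ‖d‖ := by rw [hd]
    calc ε * ‖u₁‖ ≤ ⟪d, u₂⟫ / ‖u₂‖ - c2 * (‖u₁‖ - ‖y₂‖) := h1.trans_eq h2
      _ ≤ ‖d‖ + ‖d‖ := by linarith
      _ = 2 * ‖d‖ := by ring
  rw [div_mul_eq_mul_div, le_div_iff₀ hε]
  linarith
end

section
/- Let H be a real inner product space, d, u₁, u₂, y₂ ∈ H with u₁ = d + y₂, u₁ ≠ 0, u₂ ≠ 0, y₂ ≠ 0. If ⟨y₂, u₂⟩/(‖y₂‖·‖u₂‖) − ⟨u₁, u₂⟩/(‖u₁‖·‖u₂‖) ≥ ε̃ for some ε̃ > 0, then ‖u₁‖ ≤ (2/ε̃)·‖d‖. -/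
open RealInnerProductSpace

theorem small_phase_feedback_estimate_symm {H : Type*} [NormedAddCommGroup H]
    [InnerProductSpace ℝ H] (d u₁ u₂ y₂ : H)
    (hfb : u₁ = d + y₂) (hu₁ : u₁ ≠ 0) (hu₂ : u₂ ≠ 0) (hy₂ : y₂ ≠ 0)
    (ε : ℝ) (hε : 0 < ε)
    (h : ⟪y₂, u₂⟫ / (‖y₂‖ * ‖u₂‖) - ⟪u₁, u₂⟫ / (‖u₁‖ * ‖u₂‖) ≥ ε) :
    ‖u₁‖ ≤ (2 / ε) * ‖d‖ := by
  have hnu : (0:ℝ) < ‖u₁‖ := norm_pos_iff.mpr hu₁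
  have hny : (0:ℝ) < ‖y₂‖ := norm_pos_iff.mpr hy₂
  have hnu₂ : (0:ℝ) < ‖u₂‖ := norm_pos_iff.mpr hu₂
  set a : H := (‖u₁‖)⁻¹ • u₁ with ha
  set b : H := (‖y₂‖)⁻¹ • y₂ with hb
  set c : H := (‖u₂‖)⁻¹ • u₂ with hc
  have hinner : ⟪b - a, c⟫ =
      ⟪y₂, u₂⟫ / (‖y₂‖ * ‖u₂‖) - ⟪u₁, u₂⟫ / (‖u₁‖ * ‖u₂‖) := by
    simp [ha, hb, hc, inner_sub_left, real_inner_smul_left, real_inner_smul_right,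
      div_eq_mul_inv, mul_comm, mul_assoc, mul_left_comm]
  have hcnorm : ‖c‖ = 1 := by
    rw [hc, norm_smul]
    simp [abs_of_pos (inv_pos.mpr hnu₂), inv_mul_cancel₀ hnu₂.ne']
  have h1 : ε ≤ ‖b - a‖ := by
    calc ε ≤ ⟪b - a, c⟫ := by rw [hinner]; exact h
    _ ≤ ‖b - a‖ * ‖c‖ := real_inner_le_norm _ _
    _ = ‖b - a‖ := by rw [hcnorm, mul_one]
  have hkey : ‖u₁‖ * ‖b - a‖ ≤ 2 * ‖d‖ := by
    have h2 : ‖u₁‖ * ‖b - a‖ = ‖(‖u₁‖) • b - u₁‖ := by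
      rw [← norm_smul_of_nonneg hnu.le, smul_sub, ha, smul_inv_smul₀ hnu.ne']
    have h3 : ‖(‖u₁‖) • b - y₂‖ = |‖u₁‖ - ‖y₂‖| := by
      have : (‖u₁‖) • b - y₂ = (‖u₁‖ - ‖y₂‖) • b := by
        rw [sub_smul, hb, smul_inv_smul₀ hny.ne']
      rw [this, norm_smul, Real.norm_eq_abs]
      have hbnorm : ‖b‖ = 1 := by
        rw [hb, norm_smul]
        simp [abs_of_pos (inv_pos.mpr hny), inv_mul_cancel₀ hny.ne']
      rw [hbnorm, mul_one]
    have h4 : |‖u₁‖ - ‖y₂‖| ≤ ‖d‖ := by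
      have := abs_norm_sub_norm_le u₁ y₂
      have hd : u₁ - y₂ = d := by rw [hfb]; abel
      rwa [hd] at this
    have h5 : ‖y₂ - u₁‖ = ‖d‖ := by
      have : y₂ - u₁ = -d := by rw [hfb]; abel
      rw [this, norm_neg]
    calc ‖u₁‖ * ‖b - a‖ = ‖(‖u₁‖) • b - u₁‖ := h2
    _ ≤ ‖(‖u₁‖) • b - y₂‖ + ‖y₂ - u₁‖ := norm_sub_le_norm_sub_add_norm_sub _ _ _
    _ ≤ ‖d‖ + ‖d‖ := by rw [h3, h5]; exact add_le_add_left h4 _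
    _ = 2 * ‖d‖ := by ring
  have : ε * ‖u₁‖ ≤ 2 * ‖d‖ := by
    calc ε * ‖u₁‖ ≤ ‖b - a‖ * ‖u₁‖ := mul_le_mul_of_nonneg_right h1 hnu.le
    _ = ‖u₁‖ * ‖b - a‖ := mul_comm _ _
    _ ≤ 2 * ‖d‖ := hkey
  rw [div_mul_eq_mul_div, le_div_iff₀ hε, mul_comm]
  exact this
end

section
/- Let H be a real inner product space, d, u₁, u₂, y₂ ∈ H with u₁ = d + y₂, u₁ ≠ 0, u₂ ≠ 0, y₂ ≠ 0, and suppose ⟨u₁, u₂⟩/(‖u₁‖·‖u₂‖) − ⟨y₂, u₂⟩/(‖y₂‖·‖u₂‖) ≥ ε̄ for some ε̄ > 0. If additionally ‖u₂‖ ≤ L·‖u₁‖ for some L ≥ 0, then ‖u₁‖ + ‖u₂‖ ≤ (2(1 + L)/ε̄)·‖d‖. -/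
open RealInnerProductSpace

theorem small_phase_combined_bound {H : Type*} [NormedAddCommGroup H]
    [InnerProductSpace ℝ H] (d u₁ u₂ y₂ : H)
    (hfb : u₁ = d + y₂) (hu₁ : u₁ ≠ 0) (hu₂ : u₂ ≠ 0) (hy₂ : y₂ ≠ 0)
    (ε : ℝ) (hε : 0 < ε)
    (h : ⟪u₁, u₂⟫ / (‖u₁‖ * ‖u₂‖) - ⟪y₂, u₂⟫ / (‖y₂‖ * ‖u₂‖) ≥ ε)
    (L : ℝ) (hL : 0 ≤ L) (hgain : ‖u₂‖ ≤ L * ‖u₁‖) :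
    ‖u₁‖ + ‖u₂‖ ≤ (2 * (1 + L) / ε) * ‖d‖ := by
  have hn1 : (0:ℝ) < ‖u₁‖ := norm_pos_iff.mpr hu₁
  have hn2 : (0:ℝ) < ‖u₂‖ := norm_pos_iff.mpr hu₂
  have hn3 : (0:ℝ) < ‖y₂‖ := norm_pos_iff.mpr hy₂
  -- rewrite the phase condition as an inner product of normalized vectors
  have key : ε ≤ ⟪(‖u₁‖)⁻¹ • u₁ - (‖y₂‖)⁻¹ • y₂, (‖u₂‖)⁻¹ • u₂⟫ := by
    have : ⟪(‖u₁‖)⁻¹ • u₁ - (‖y₂‖)⁻¹ • y₂, (‖u₂‖)⁻¹ • u₂⟫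
        = ⟪u₁, u₂⟫ / (‖u₁‖ * ‖u₂‖) - ⟪y₂, u₂⟫ / (‖y₂‖ * ‖u₂‖) := by
      rw [inner_sub_left, real_inner_smul_left, real_inner_smul_left,
        real_inner_smul_right, real_inner_smul_right]
      field_simp
    rw [this]; exact h
  have hcs : ⟪(‖u₁‖)⁻¹ • u₁ - (‖y₂‖)⁻¹ • y₂, (‖u₂‖)⁻¹ • u₂⟫
      ≤ ‖(‖u₁‖)⁻¹ • u₁ - (‖y₂‖)⁻¹ • y₂‖ := by
    have := real_inner_le_norm ((‖u₁‖)⁻¹ • u₁ - (‖y₂‖)⁻¹ • y₂) ((‖u₂‖)⁻¹ • u₂)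
    have hnorm : ‖(‖u₂‖)⁻¹ • u₂‖ = 1 := by
      rw [norm_smul]; simp [abs_of_pos (inv_pos.mpr hn2)]
      field_simp
    rw [hnorm, mul_one] at this
    exact this
  -- estimate the norm of the difference of normalized vectors
  have hdiff : ‖(‖u₁‖)⁻¹ • u₁ - (‖y₂‖)⁻¹ • y₂‖ ≤ 2 * ‖u₁ - y₂‖ / ‖u₁‖ := by
    have hsplit : (‖u₁‖)⁻¹ • u₁ - (‖y₂‖)⁻¹ • y₂
        = (‖u₁‖)⁻¹ • (u₁ - y₂) + ((‖u₁‖)⁻¹ - (‖y₂‖)⁻¹) • y₂ := by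
      rw [smul_sub, sub_smul]; abel
    rw [hsplit]
    calc ‖(‖u₁‖)⁻¹ • (u₁ - y₂) + ((‖u₁‖)⁻¹ - (‖y₂‖)⁻¹) • y₂‖
        ≤ ‖(‖u₁‖)⁻¹ • (u₁ - y₂)‖ + ‖((‖u₁‖)⁻¹ - (‖y₂‖)⁻¹) • y₂‖ := norm_add_le _ _
      _ = ‖u₁ - y₂‖ / ‖u₁‖ + |(‖u₁‖)⁻¹ - (‖y₂‖)⁻¹| * ‖y₂‖ := by
          rw [norm_smul, norm_smul]
          simp [abs_of_pos (inv_pos.mpr hn1), Real.norm_eq_abs]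
          ring
      _ ≤ ‖u₁ - y₂‖ / ‖u₁‖ + ‖u₁ - y₂‖ / ‖u₁‖ := by
          gcongr
          have heq : (‖u₁‖)⁻¹ - (‖y₂‖)⁻¹ = (‖y₂‖ - ‖u₁‖) / (‖u₁‖ * ‖y₂‖) := by
            field_simp
          have : |(‖u₁‖)⁻¹ - (‖y₂‖)⁻¹| * ‖y₂‖ = |‖y₂‖ - ‖u₁‖| / ‖u₁‖ := by
            rw [heq, abs_div, abs_mul, abs_of_pos hn1, abs_of_pos hn3]
            field_simp
          rw [this]
          gcongr
          calc |‖y₂‖ - ‖u₁‖| = |‖u₁‖ - ‖y₂‖| := abs_sub_comm _ _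
            _ ≤ ‖u₁ - y₂‖ := abs_norm_sub_norm_le _ _
      _ = 2 * ‖u₁ - y₂‖ / ‖u₁‖ := by ring
  have hd : u₁ - y₂ = d := by rw [hfb]; abel
  have hkey : ε ≤ 2 * ‖d‖ / ‖u₁‖ := by
    rw [← hd]; exact key.trans (hcs.trans hdiff)
  have hu1d : ‖u₁‖ ≤ 2 / ε * ‖d‖ := by
    rw [div_mul_eq_mul_div, le_div_iff₀ hε]
    calc ‖u₁‖ * ε ≤ ‖u₁‖ * (2 * ‖d‖ / ‖u₁‖) := by gcongr
      _ = 2 * ‖d‖ := by field_simp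
  calc ‖u₁‖ + ‖u₂‖ ≤ ‖u₁‖ + L * ‖u₁‖ := by gcongr
    _ = (1 + L) * ‖u₁‖ := by ring
    _ ≤ (1 + L) * (2 / ε * ‖d‖) :=
        mul_le_mul_of_nonneg_left hu1d (by linarith)
    _ = (2 * (1 + L) / ε) * ‖d‖ := by ring
end

section
/- Let H be a real inner product space and u₁, y₁, u₂, y₂, d ∈ H satisfy the negative feedback relations u₁ = d − y₂ and u₂ = y₁. Suppose ⟨u₁, y₁⟩ ≥ δ‖u₁‖² + ε‖y₁‖² with δ, ε > 0 (strict passivity of the forward component) and ⟨u₂, y₂⟩ ≥ 0 (passivity of the return component). Then ‖y₁‖ ≤ ‖d‖/ε and ‖u₁‖ ≤ ‖d‖/√(δε). -/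
open RealInnerProductSpace

theorem incremental_passivity_feedback_bound {H : Type*} [NormedAddCommGroup H]
    [InnerProductSpace ℝ H] (u₁ y₁ u₂ y₂ d : H)
    (hfb1 : u₁ = d - y₂) (hfb2 : u₂ = y₁)
    (δ ε : ℝ) (hδ : 0 < δ) (hε : 0 < ε)
    (hstrict : ⟪u₁, y₁⟫ ≥ δ * ‖u₁‖ ^ 2 + ε * ‖y₁‖ ^ 2)
    (hpassive : ⟪u₂, y₂⟫ ≥ 0) :
    ‖y₁‖ ≤ ‖d‖ / ε ∧ ‖u₁‖ ≤ ‖d‖ / Real.sqrt (δ * ε) := by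
  have key : δ * ‖u₁‖ ^ 2 + ε * ‖y₁‖ ^ 2 ≤ ‖d‖ * ‖y₁‖ := by
    have h1 : ⟪u₁, y₁⟫ = ⟪d, y₁⟫ - ⟪y₂, y₁⟫ := by
      rw [hfb1, inner_sub_left]
    have h2 : ⟪y₂, y₁⟫ ≥ 0 := by
      rwa [hfb2, real_inner_comm] at hpassive
    have h3 : ⟪d, y₁⟫ ≤ ‖d‖ * ‖y₁‖ := real_inner_le_norm d y₁
    nlinarith [hstrict]
  have hy2 : ε * ‖y₁‖ ^ 2 ≤ ‖d‖ * ‖y₁‖ := by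
    nlinarith [sq_nonneg ‖u₁‖]
  have hy : ‖y₁‖ ≤ ‖d‖ / ε := by
    rcases eq_or_lt_of_le (norm_nonneg y₁) with h | h
    · rw [← h]; positivity
    · rw [le_div_iff₀ hε]
      nlinarith
  refine ⟨hy, ?_⟩
  have hu2 : ‖u₁‖ ^ 2 ≤ (‖d‖ / Real.sqrt (δ * ε)) ^ 2 := by
    have hs : Real.sqrt (δ * ε) ^ 2 = δ * ε := Real.sq_sqrt (by positivity)
    rw [div_pow, hs, le_div_iff₀ (by positivity)]
    have : δ * ‖u₁‖ ^ 2 ≤ ‖d‖ * ‖y₁‖ := by nlinarith [sq_nonneg ‖y₁‖]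
    have hd : ‖d‖ * ‖y₁‖ ≤ ‖d‖ * (‖d‖ / ε) :=
      mul_le_mul_of_nonneg_left hy (norm_nonneg d)
    calc ‖u₁‖ ^ 2 * (δ * ε) = (δ * ‖u₁‖ ^ 2) * ε := by ring
    _ ≤ (‖d‖ * (‖d‖ / ε)) * ε := by nlinarith
    _ = ‖d‖ ^ 2 := by field_simp
  nlinarith [hu2, norm_nonneg u₁, div_nonneg (norm_nonneg d) (Real.sqrt_nonneg (δ * ε))]
end
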